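/- Let N ≥ 1. The linear span of the set { h_K|_{S^{N-1}} : K ⊆ ℝ^N nonempty compact convex } of restrictions of support functions to the unit sphere is dense in C(S^{N-1}, ℝ) with the supremum norm; equivalently, every continuous real function on S^{N-1} is the uniform limit of differences h_K|_{S^{N-1}} − h_L|_{S^{N-1}} of restricted support functions of nonempty compact convex sets K, L ⊆ ℝ^N. -/

import Mathlib

/-- The unit sphere `S^{N-1}` of Euclidean space `ℝ^N`. -/
abbrev UnitSphere (N : ℕ) : Set (EuclideanSpace ℝ (Fin N)) :=
  Metric.sphere (0 : EuclideanSpace ℝ (Fin N)) 1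

/-- The support function `h_K(z) = sup_{x ∈ K} ⟪x, z⟫` of a set `K ⊆ ℝ^N`. -/
noncomputable def suppFn {N : ℕ} (K : Set (EuclideanSpace ℝ (Fin N)))
    (z : EuclideanSpace ℝ (Fin N)) : ℝ :=
  sSup ((fun x => (inner ℝ x z : ℝ)) '' K)

/-- The set of restrictions to the unit sphere of support functions of nonempty compact
convex subsets of `ℝ^N`, viewed inside `C(S^{N-1}, ℝ)`. -/
def restrictedSuppFns (N : ℕ) : Set C(UnitSphere N, ℝ) :=
  {g | ∃ K : Set (EuclideanSpace ℝ (Fin N)), K.Nonempty ∧ IsCompact K ∧ Convex ℝ K ∧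
    ∀ z : UnitSphere N, g z = suppFn K (z : EuclideanSpace ℝ (Fin N))}

open scoped RealInnerProductSpace Pointwise

namespace SuppFnAux

variable {N : ℕ}

/-- The support function of a nonempty compact set is attained at a maximizer. -/
lemma exists_max (K : Set (EuclideanSpace ℝ (Fin N))) (hK : IsCompact K) (hne : K.Nonempty)
    (z : EuclideanSpace ℝ (Fin N)) :
    ∃ x ∈ K, suppFn K z = ⟪x, z⟫ ∧ ∀ y ∈ K, ⟪y, z⟫ ≤ ⟪x, z⟫ := by
  obtain ⟨x, hx, h1, h2⟩ := hK.exists_sSup_image_eq_and_ge (α := ℝ) hne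
    ((continuous_id.inner continuous_const).continuousOn (s := K))
  exact ⟨x, hx, h1, h2⟩

lemma le_suppFn {K : Set (EuclideanSpace ℝ (Fin N))} (hK : IsCompact K) (hne : K.Nonempty)
    {x : EuclideanSpace ℝ (Fin N)} (hx : x ∈ K) (z : EuclideanSpace ℝ (Fin N)) :
    ⟪x, z⟫ ≤ suppFn K z := by
  obtain ⟨w, hw, h1, h2⟩ := exists_max K hK hne z
  rw [h1]; exact h2 x hx

lemma suppFn_le {K : Set (EuclideanSpace ℝ (Fin N))} (hne : K.Nonempty)
    {z : EuclideanSpace ℝ (Fin N)} {c : ℝ} (h : ∀ x ∈ K, ⟪x, z⟫ ≤ c) :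
    suppFn K z ≤ c := by
  apply csSup_le (hne.image _)
  rintro r ⟨x, hx, rfl⟩
  exact h x hx

lemma suppFn_add {K L : Set (EuclideanSpace ℝ (Fin N))} (hK : IsCompact K) (hKne : K.Nonempty)
    (hL : IsCompact L) (hLne : L.Nonempty) (z : EuclideanSpace ℝ (Fin N)) :
    suppFn (K + L) z = suppFn K z + suppFn L z := by
  apply le_antisymm
  · apply suppFn_le (hKne.add hLne)
    rintro x ⟨a, ha, b, hb, rfl⟩
    rw [inner_add_left]
    exact add_le_add (le_suppFn hK hKne ha z) (le_suppFn hL hLne hb z)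
  · obtain ⟨a, ha, h1, -⟩ := exists_max K hK hKne z
    obtain ⟨b, hb, h2, -⟩ := exists_max L hL hLne z
    rw [h1, h2, ← inner_add_left]
    exact le_suppFn (hK.add hL) (hKne.add hLne) (Set.add_mem_add ha hb) z

lemma isCompact_convexJoin {K L : Set (EuclideanSpace ℝ (Fin N))} (hK : IsCompact K)
    (hL : IsCompact L) : IsCompact (convexJoin ℝ K L) := by
  have heq : convexJoin ℝ K L =
      (fun p : ℝ × EuclideanSpace ℝ (Fin N) × EuclideanSpace ℝ (Fin N) =>
        (1 - p.1) • p.2.1 + p.1 • p.2.2) '' (Set.Icc (0:ℝ) 1 ×ˢ K ×ˢ L) := by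
    ext w
    constructor
    · intro hw
      rw [convexJoin] at hw
      simp only [Set.mem_iUnion] at hw
      obtain ⟨x, hx, y, hy, hw⟩ := hw
      rw [segment_eq_image] at hw
      obtain ⟨t, ht, hw⟩ := hw
      exact ⟨⟨t, x, y⟩, ⟨ht, hx, hy⟩, hw⟩
    · rintro ⟨⟨t, x, y⟩, ⟨ht, hx, hy⟩, rfl⟩
      rw [convexJoin]
      simp only [Set.mem_iUnion]
      refine ⟨x, hx, y, hy, ?_⟩
      rw [segment_eq_image]
      exact ⟨t, ht, rfl⟩
  rw [heq]
  exact ((isCompact_Icc.prod (hK.prod hL)).image (by fun_prop))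

lemma suppFn_convexJoin {K L : Set (EuclideanSpace ℝ (Fin N))} (hK : IsCompact K)
    (hKne : K.Nonempty) (hL : IsCompact L) (hLne : L.Nonempty) (z : EuclideanSpace ℝ (Fin N)) :
    suppFn (convexJoin ℝ K L) z = max (suppFn K z) (suppFn L z) := by
  have hJc : IsCompact (convexJoin ℝ K L) := isCompact_convexJoin hK hL
  have hJne : (convexJoin ℝ K L).Nonempty := by
    obtain ⟨x, hx⟩ := hKne
    exact ⟨x, subset_convexJoin_left hLne hx⟩
  apply le_antisymm
  · apply suppFn_le hJne
    intro w hw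
    rw [mem_convexJoin] at hw
    obtain ⟨a, ha, b, hb, s, t, hs, ht, hst, rfl⟩ := hw
    rw [inner_add_left, real_inner_smul_left, real_inner_smul_left]
    calc s * ⟪a, z⟫ + t * ⟪b, z⟫
        ≤ s * max (suppFn K z) (suppFn L z) + t * max (suppFn K z) (suppFn L z) := by
          gcongr
          · exact (le_suppFn hK hKne ha z).trans (le_max_left _ _)
          · exact (le_suppFn hL hLne hb z).trans (le_max_right _ _)
      _ = max (suppFn K z) (suppFn L z) := by rw [← add_mul, hst, one_mul]
  · apply max_le
    · obtain ⟨a, ha, h1, -⟩ := exists_max K hK hKne z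
      rw [h1]
      exact le_suppFn hJc hJne (subset_convexJoin_left hLne ha) z
    · obtain ⟨b, hb, h1, -⟩ := exists_max L hL hLne z
      rw [h1]
      exact le_suppFn hJc hJne (subset_convexJoin_right hKne hb) z

lemma suppFn_smul {K : Set (EuclideanSpace ℝ (Fin N))} (hK : IsCompact K) (hKne : K.Nonempty)
    {c : ℝ} (hc : 0 ≤ c) (z : EuclideanSpace ℝ (Fin N)) :
    suppFn (c • K) z = c * suppFn K z := by
  have hcK : IsCompact (c • K) := hK.smul c
  have hcKne : (c • K).Nonempty := hKne.smul_set
  apply le_antisymm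
  · apply suppFn_le hcKne
    rintro x ⟨a, ha, rfl⟩
    rw [real_inner_smul_left]
    exact mul_le_mul_of_nonneg_left (le_suppFn hK hKne ha z) hc
  · obtain ⟨a, ha, h1, -⟩ := exists_max K hK hKne z
    rw [h1, ← real_inner_smul_left]
    exact le_suppFn hcK hcKne (Set.smul_mem_smul_set ha) z

lemma suppFn_singleton (x z : EuclideanSpace ℝ (Fin N)) : suppFn {x} z = ⟪x, z⟫ := by
  simp [suppFn]

lemma suppFn_closedBall {z : EuclideanSpace ℝ (Fin N)} (hz : ‖z‖ = 1) :
    suppFn (Metric.closedBall (0 : EuclideanSpace ℝ (Fin N)) 1) z = 1 := by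
  apply le_antisymm
  · apply suppFn_le ⟨0, by simp⟩
    intro x hx
    rw [Metric.mem_closedBall, dist_zero_right] at hx
    calc ⟪x, z⟫ ≤ ‖x‖ * ‖z‖ := real_inner_le_norm x z
      _ ≤ 1 := by rw [hz, mul_one]; exact hx
  · have hmem : z ∈ Metric.closedBall (0 : EuclideanSpace ℝ (Fin N)) 1 := by
      rw [Metric.mem_closedBall, dist_zero_right, hz]
    have := le_suppFn (isCompact_closedBall _ _) ⟨0, by simp⟩ hmem z
    rwa [real_inner_self_eq_norm_sq, hz, one_pow] at this

end SuppFnAux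

open SuppFnAux

section Closure

variable {N : ℕ}

lemma zero_mem_S : (0 : C(UnitSphere N, ℝ)) ∈ restrictedSuppFns N := by
  refine ⟨{0}, ⟨0, rfl⟩, isCompact_singleton, convex_singleton 0, fun z => ?_⟩
  rw [suppFn_singleton]
  simp

lemma one_mem_S : (1 : C(UnitSphere N, ℝ)) ∈ restrictedSuppFns N := by
  refine ⟨Metric.closedBall 0 1, ⟨0, by simp⟩, isCompact_closedBall _ _,
    convex_closedBall _ _, fun z => ?_⟩
  rw [suppFn_closedBall (mem_sphere_zero_iff_norm.mp z.2)]
  rfl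

lemma inner_mem_S (w : EuclideanSpace ℝ (Fin N)) :
    (⟨fun z => ⟪w, (z : EuclideanSpace ℝ (Fin N))⟫,
      (continuous_const.inner continuous_subtype_val)⟩ : C(UnitSphere N, ℝ)) ∈
      restrictedSuppFns N := by
  refine ⟨{w}, ⟨w, rfl⟩, isCompact_singleton, convex_singleton w, fun z => ?_⟩
  rw [suppFn_singleton]
  rfl

lemma add_mem_S {f g : C(UnitSphere N, ℝ)} (hf : f ∈ restrictedSuppFns N)
    (hg : g ∈ restrictedSuppFns N) : f + g ∈ restrictedSuppFns N := by
  obtain ⟨K, hKne, hKc, hKv, hK⟩ := hf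
  obtain ⟨L, hLne, hLc, hLv, hL⟩ := hg
  refine ⟨K + L, hKne.add hLne, hKc.add hLc, hKv.add hLv, fun z => ?_⟩
  rw [ContinuousMap.add_apply, hK z, hL z, suppFn_add hKc hKne hLc hLne]

lemma sup_mem_S {f g : C(UnitSphere N, ℝ)} (hf : f ∈ restrictedSuppFns N)
    (hg : g ∈ restrictedSuppFns N) : f ⊔ g ∈ restrictedSuppFns N := by
  obtain ⟨K, hKne, hKc, hKv, hK⟩ := hf
  obtain ⟨L, hLne, hLc, hLv, hL⟩ := hg
  refine ⟨convexJoin ℝ K L, ⟨hKne.some, subset_convexJoin_left hLne hKne.some_mem⟩,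
    isCompact_convexJoin hKc hLc, hKv.convexJoin hLv, fun z => ?_⟩
  rw [suppFn_convexJoin hKc hKne hLc hLne, ContinuousMap.sup_apply, hK z, hL z]

lemma smul_mem_S {f : C(UnitSphere N, ℝ)} (hf : f ∈ restrictedSuppFns N) {c : ℝ} (hc : 0 ≤ c) :
    c • f ∈ restrictedSuppFns N := by
  obtain ⟨K, hKne, hKc, hKv, hK⟩ := hf
  refine ⟨c • K, hKne.smul_set, hKc.smul c, hKv.smul c, fun z => ?_⟩
  rw [suppFn_smul hKc hKne hc, ContinuousMap.smul_apply, hK z, smul_eq_mul]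

/-- Every element of the span is a difference of two restricted support functions. -/
lemma span_eq_diff :
    (↑(Submodule.span ℝ (restrictedSuppFns N)) : Set C(UnitSphere N, ℝ)) =
      {f | ∃ g ∈ restrictedSuppFns N, ∃ h ∈ restrictedSuppFns N, f = g - h} := by
  apply le_antisymm
  · let P : Submodule ℝ C(UnitSphere N, ℝ) :=
      { carrier := {f | ∃ g ∈ restrictedSuppFns N, ∃ h ∈ restrictedSuppFns N, f = g - h}
        add_mem' := by
          rintro a b ⟨g1, hg1, h1, hh1, rfl⟩ ⟨g2, hg2, h2, hh2, rfl⟩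
          exact ⟨g1 + g2, add_mem_S hg1 hg2, h1 + h2, add_mem_S hh1 hh2, by abel⟩
        zero_mem' := ⟨0, zero_mem_S, 0, zero_mem_S, by abel⟩
        smul_mem' := by
          rintro c a ⟨g, hg, h, hh, rfl⟩
          rcases le_total 0 c with hc | hc
          · exact ⟨c • g, smul_mem_S hg hc, c • h, smul_mem_S hh hc, by
              rw [smul_sub]⟩
          · refine ⟨(-c) • h, smul_mem_S hh (by linarith), (-c) • g, smul_mem_S hg (by linarith),
              ?_⟩
            rw [smul_sub, neg_smul, neg_smul]
            abel }
    have : Submodule.span ℝ (restrictedSuppFns N) ≤ P := by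
      apply Submodule.span_le.mpr
      intro f hf
      exact ⟨f, hf, 0, zero_mem_S, by abel⟩
    exact this
  · rintro f ⟨g, hg, h, hh, rfl⟩
    exact sub_mem (Submodule.subset_span hg) (Submodule.subset_span hh)

lemma max_sub_identity (p q r s : ℝ) :
    max (p - q) (r - s) = max (p + s) (r + q) - (q + s) := by
  rcases le_total (p + s) (r + q) with h | h
  · rw [max_eq_right h, max_eq_right (by linarith)]; ring
  · rw [max_eq_left h, max_eq_left (by linarith)]; ring

lemma sup_mem_span {f g : C(UnitSphere N, ℝ)}
    (hf : f ∈ (↑(Submodule.span ℝ (restrictedSuppFns N)) : Set C(UnitSphere N, ℝ)))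
    (hg : g ∈ (↑(Submodule.span ℝ (restrictedSuppFns N)) : Set C(UnitSphere N, ℝ))) :
    f ⊔ g ∈ (↑(Submodule.span ℝ (restrictedSuppFns N)) : Set C(UnitSphere N, ℝ)) := by
  rw [span_eq_diff] at hf hg ⊢
  obtain ⟨a, ha, b, hb, rfl⟩ := hf
  obtain ⟨c, hc, d, hd, rfl⟩ := hg
  refine ⟨(a + d) ⊔ (c + b), sup_mem_S (add_mem_S ha hd) (add_mem_S hc hb),
    b + d, add_mem_S hb hd, ?_⟩
  ext z
  simp only [ContinuousMap.sup_apply, ContinuousMap.sub_apply, ContinuousMap.add_apply]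
  exact max_sub_identity _ _ _ _

lemma inf_mem_span {f g : C(UnitSphere N, ℝ)}
    (hf : f ∈ (↑(Submodule.span ℝ (restrictedSuppFns N)) : Set C(UnitSphere N, ℝ)))
    (hg : g ∈ (↑(Submodule.span ℝ (restrictedSuppFns N)) : Set C(UnitSphere N, ℝ))) :
    f ⊓ g ∈ (↑(Submodule.span ℝ (restrictedSuppFns N)) : Set C(UnitSphere N, ℝ)) := by
  have h1 : f ⊓ g = -((-f) ⊔ (-g)) := by
    ext z
    simp only [ContinuousMap.inf_apply, ContinuousMap.neg_apply, ContinuousMap.sup_apply]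
    rw [← min_neg_neg, neg_neg, neg_neg]
  rw [h1]
  exact neg_mem (sup_mem_span (neg_mem hf) (neg_mem hg))

end Closure

/-- **The space of convex sets is dense.** The linear span of the restrictions to the
unit sphere of support functions of nonempty compact convex subsets of `ℝ^N` is dense in
`C(S^{N-1}, ℝ)` with the supremum norm. -/
theorem span_restrictedSuppFns_dense {N : ℕ} (hN : 1 ≤ N) :
    Dense (↑(Submodule.span ℝ (restrictedSuppFns N)) : Set C(UnitSphere N, ℝ)) := by
  rw [dense_iff_closure_eq, ← Set.top_eq_univ]
  apply ContinuousMap.sublattice_closure_eq_top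
  · exact ⟨0, Submodule.zero_mem _⟩
  · intro f hf g hg
    exact inf_mem_span hf hg
  · intro f hf g hg
    exact sup_mem_span hf hg
  · intro v x y
    by_cases hxy : x = y
    · refine ⟨(v x) • 1, Submodule.smul_mem _ _ (Submodule.subset_span one_mem_S), ?_, ?_⟩
      · simp
      · subst hxy; simp
    · set w : EuclideanSpace ℝ (Fin N) := (x : EuclideanSpace ℝ (Fin N)) - y with hw
      have hwne : w ≠ 0 := sub_ne_zero.mpr (fun h => hxy (Subtype.ext h))
      set t₁ : ℝ := ⟪w, (x : EuclideanSpace ℝ (Fin N))⟫ with ht₁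
      set t₂ : ℝ := ⟪w, (y : EuclideanSpace ℝ (Fin N))⟫ with ht₂
      have hne : t₁ - t₂ ≠ 0 := by
        rw [ht₁, ht₂, ← inner_sub_right, ← hw]
        rw [real_inner_self_eq_norm_sq]
        exact pow_ne_zero 2 (norm_ne_zero_iff.mpr hwne)
      set a : ℝ := (v x - v y) / (t₁ - t₂) with ha
      set b : ℝ := v x - a * t₁ with hb
      set fw : C(UnitSphere N, ℝ) :=
        ⟨fun z => ⟪w, (z : EuclideanSpace ℝ (Fin N))⟫,
          (continuous_const.inner continuous_subtype_val)⟩ with hfw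
      refine ⟨a • fw + b • 1, ?_, ?_, ?_⟩
      · exact add_mem (Submodule.smul_mem _ _ (Submodule.subset_span (inner_mem_S w)))
          (Submodule.smul_mem _ _ (Submodule.subset_span one_mem_S))
      · simp only [ContinuousMap.add_apply, ContinuousMap.smul_apply, ContinuousMap.one_apply,
          smul_eq_mul, mul_one, hfw, ContinuousMap.coe_mk]
        rw [hb, ht₁]; ring
      · simp only [ContinuousMap.add_apply, ContinuousMap.smul_apply, ContinuousMap.one_apply,
          smul_eq_mul, mul_one, hfw, ContinuousMap.coe_mk]
        have key : a * (t₁ - t₂) = v x - v y := div_mul_cancel₀ _ hne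
        rw [hb]
        linarith [key]
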